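/- Let d ≥ 1 and ℓ ≥ 1, and let γ : Fin d × Fin ℓ ≃ Fin (d·ℓ) be a bijection such that for each i : Fin d the map j ↦ γ(i, j) is strictly monotone. Define the curve value of a grid point p : Fin d → ℕ (with p i < 2^ℓ for all i) by F_γ(p) = Σ_{i : Fin d} Σ_{j : Fin ℓ} (the j-th bit of p i, as 0 or 1) · 2^{γ(i,j)}. Then F_γ is monotone: for all grid points p and q, if p i ≤ q i for every i : Fin d, then F_γ(p) ≤ F_γ(q). -/

import Mathlib

lemma sum_pow_lt_aux (e : ℕ → ℕ) (he : StrictMono e) (k : ℕ) :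
    ∑ j ∈ Finset.range k, 2 ^ e j < 2 ^ e k := by
  induction k with
  | zero => simp [Nat.two_pow_pos]
  | succ k ih =>
    rw [Finset.sum_range_succ]
    have h1 : e k + 1 ≤ e (k + 1) := he (Nat.lt_succ_self k)
    calc ∑ j ∈ Finset.range k, 2 ^ e j + 2 ^ e k
        < 2 ^ e k + 2 ^ e k := by omega
      _ = 2 ^ (e k + 1) := by ring
      _ ≤ 2 ^ e (k + 1) := Nat.pow_le_pow_right (by norm_num) h1

lemma testBit_top (x n : ℕ) (hx : x < 2 ^ (n + 1)) :
    Nat.testBit x n = decide (2 ^ n ≤ x) := by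
  rcases le_or_gt (2 ^ n) x with h | h
  · have hdiv : x / 2 ^ n = 1 := by
      have h2 : 2 ^ (n + 1) = 2 ^ n * 2 := by ring
      have hlt : x / 2 ^ n < 2 := Nat.div_lt_of_lt_mul (by omega)
      have hge : 1 ≤ x / 2 ^ n := (Nat.one_le_div_iff (Nat.two_pow_pos n)).2 h
      omega
    simp [Nat.testBit_eq_decide_div_mod_eq, hdiv, h]
  · simp [Nat.testBit_lt_two_pow h, Nat.not_le.2 h]

lemma bit_sum_mono (e : ℕ → ℕ) (he : StrictMono e) :
    ∀ ℓ a b : ℕ, a ≤ b → b < 2 ^ ℓ →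
    ∑ j ∈ Finset.range ℓ, (if Nat.testBit a j then 1 else 0) * 2 ^ e j ≤
    ∑ j ∈ Finset.range ℓ, (if Nat.testBit b j then 1 else 0) * 2 ^ e j := by
  intro ℓ
  induction ℓ with
  | zero => intro a b hab hb; interval_cases b <;> interval_cases a <;> simp
  | succ ℓ ih =>
    intro a b hab hb
    have ha : a < 2 ^ (ℓ + 1) := lt_of_le_of_lt hab hb
    rw [Finset.sum_range_succ, Finset.sum_range_succ]
    have hta := testBit_top a ℓ ha
    have htb := testBit_top b ℓ hb
    by_cases hbtop : 2 ^ ℓ ≤ b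
    · by_cases hatop : 2 ^ ℓ ≤ a
      · -- both top bits set
        have hmod : ∀ x : ℕ, 2 ^ ℓ ≤ x → x < 2 ^ (ℓ + 1) → x % 2 ^ ℓ = x - 2 ^ ℓ := by
          intro x hx hx2
          have h2 : 2 ^ (ℓ + 1) = 2 ^ ℓ * 2 := by ring
          rw [Nat.mod_eq_sub_mod hx, Nat.mod_eq_of_lt (by omega)]
        have key := ih (a % 2 ^ ℓ) (b % 2 ^ ℓ)
          (by rw [hmod a hatop ha, hmod b hbtop hb]; omega)
          (Nat.mod_lt _ (Nat.two_pow_pos ℓ))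
        have ea : ∀ x : ℕ, ∑ j ∈ Finset.range ℓ, (if Nat.testBit (x % 2 ^ ℓ) j then 1 else 0) * 2 ^ e j
            = ∑ j ∈ Finset.range ℓ, (if Nat.testBit x j then 1 else 0) * 2 ^ e j := by
          intro x
          refine Finset.sum_congr rfl fun j hj => ?_
          rw [Nat.testBit_mod_two_pow]
          simp [Finset.mem_range.1 hj]
        rw [ea, ea] at key
        simp only [hta, htb, decide_eq_true hatop, decide_eq_true hbtop]
        simpa using key
      · -- a's top bit clear, b's set
        have h1 : ∑ j ∈ Finset.range ℓ, (if Nat.testBit a j then 1 else 0) * 2 ^ e j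
            ≤ ∑ j ∈ Finset.range ℓ, 2 ^ e j := by
          refine Finset.sum_le_sum fun j _ => ?_
          split <;> simp
        have h2 := sum_pow_lt_aux e he ℓ
        have h3 : (0:ℕ) ≤ ∑ j ∈ Finset.range ℓ, (if Nat.testBit b j then 1 else 0) * 2 ^ e j :=
          Nat.zero_le _
        have hta' : Nat.testBit a ℓ = false := by
          rw [hta]; simp; omega
        have htb' : Nat.testBit b ℓ = true := by
          rw [htb]; simpa using hbtop
        rw [hta', htb', show (if true = true then (1:ℕ) else 0) = 1 from rfl,
          show (if false = true then (1:ℕ) else 0) = 0 from rfl]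
        omega
    · -- both top bits clear
      have hb' : b < 2 ^ ℓ := by omega
      have key := ih a b hab hb'
      simp only [hta, htb, decide_eq_false hbtop, decide_eq_false (by omega : ¬ 2 ^ ℓ ≤ a)]
      simpa using key

/-- Theorem 1 (Monotonicity) of the paper: the bit-merging curve value function
is monotone with respect to the coordinatewise order on grid points. -/
theorem bmc_monotone (d ℓ : ℕ) (hd : 1 ≤ d) (hl : 1 ≤ ℓ)
    (γ : Fin d × Fin ℓ ≃ Fin (d * ℓ))
    (hγ : ∀ i : Fin d, StrictMono fun j : Fin ℓ => γ (i, j))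
    (p q : Fin d → ℕ) (hp : ∀ i, p i < 2 ^ ℓ) (hq : ∀ i, q i < 2 ^ ℓ)
    (hpq : ∀ i, p i ≤ q i) :
    (∑ i : Fin d, ∑ j : Fin ℓ,
        (if Nat.testBit (p i) j then 1 else 0) * 2 ^ (γ (i, j) : ℕ)) ≤
      ∑ i : Fin d, ∑ j : Fin ℓ,
        (if Nat.testBit (q i) j then 1 else 0) * 2 ^ (γ (i, j) : ℕ) := by
  refine Finset.sum_le_sum fun i _ => ?_
  -- extend γ (i, ·) to a strictly monotone function on ℕ
  set g : ℕ := (γ (i, ⟨ℓ - 1, by omega⟩) : ℕ) with hg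
  set e : ℕ → ℕ := fun n => if h : n < ℓ then (γ (i, ⟨n, h⟩) : ℕ) else n + g + 1 - ℓ + g
    with he_def
  have he : StrictMono e := by
    apply strictMono_nat_of_lt_succ
    intro n
    by_cases h1 : n + 1 < ℓ
    · have h0 : n < ℓ := by omega
      simp only [he_def, dif_pos h0, dif_pos h1]
      exact hγ i (show (⟨n, h0⟩ : Fin ℓ) < ⟨n + 1, h1⟩ from by simp [Fin.lt_def])
    · by_cases h0 : n < ℓ
      · have hn : n = ℓ - 1 := by omega
        simp only [he_def, dif_pos h0, dif_neg h1]
        subst hn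
        have : (γ (i, ⟨ℓ - 1, h0⟩) : ℕ) = g := rfl
        omega
      · simp only [he_def, dif_neg h0, dif_neg h1]
        omega
  have key := bit_sum_mono e he ℓ (p i) (q i) (hpq i) (hq i)
  have econv : ∀ x : ℕ, ∑ j : Fin ℓ, (if Nat.testBit x j then 1 else 0) * 2 ^ (γ (i, j) : ℕ)
      = ∑ j ∈ Finset.range ℓ, (if Nat.testBit x j then 1 else 0) * 2 ^ e j := by
    intro x
    rw [← Fin.sum_univ_eq_sum_range (fun j => (if Nat.testBit x j then 1 else 0) * 2 ^ e j) ℓ]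
    refine Finset.sum_congr rfl fun j _ => ?_
    have : e (j : ℕ) = (γ (i, j) : ℕ) := by
      simp only [he_def, dif_pos j.isLt, Fin.eta]
    rw [this]
  rw [econv, econv]
  exact key
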